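/- arXiv:1805.02125 — 2 statements merged into one kernel-verified Lean document; each statement's English description precedes it below -/
import Mathlib

section
/- Let K ≥ 2 be an integer, θ_k = 2πk/K for k = 0,…,K−1, and let x̃_k = x_c + (R + f_k)cos θ_k, ỹ_k = y_c + (R + f_k)sin θ_k. For every fixed r ∈ ℝ and every (a, b) ∈ ℝ², the circle-fitting energy C satisfies C(x̃_c, ỹ_c, r) ≤ C(a, b, r), where (x̃_c, ỹ_c) = (x_c + (1/K)∑_{k=0}^{K−1} f_k cos θ_k, y_c + (1/K)∑_{k=0}^{K−1} f_k sin θ_k); i.e., for each fixed radius, the shifted-average center minimizes the circle-fitting energy over all centers. -/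
open Real Finset Complex

lemma sum_exp_unity (K : ℕ) (hK : 2 ≤ K) :
    ∑ k ∈ Finset.range K, Complex.exp (2 * Real.pi * Complex.I * k / K) = 0 := by
  have hKne : (K : ℂ) ≠ 0 := by
    exact_mod_cast Nat.cast_ne_zero.mpr (by omega)
  set ζ : ℂ := Complex.exp (2 * Real.pi * Complex.I / K) with hζ
  have hstep : ∀ k : ℕ, Complex.exp (2 * Real.pi * Complex.I * k / K) = ζ ^ k := by
    intro k
    rw [hζ, ← Complex.exp_nat_mul]
    congr 1
    ring
  have hζK : ζ ^ K = 1 := by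
    rw [← Complex.exp_nat_mul]
    rw [show (K : ℂ) * (2 * Real.pi * Complex.I / K) = 2 * Real.pi * Complex.I by
      field_simp]
    exact Complex.exp_two_pi_mul_I
  have hζne : ζ ≠ 1 := by
    intro h
    rw [hζ, Complex.exp_eq_one_iff] at h
    obtain ⟨n, hn⟩ := h
    have hπ : (Real.pi : ℂ) ≠ 0 := by exact_mod_cast Real.pi_ne_zero
    have h2πI : (2 * (Real.pi:ℂ) * Complex.I) ≠ 0 := by
      simp [Complex.I_ne_zero, hπ]
    field_simp at hn
    have h1 : (1 : ℂ) = n * K := by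
      have := hn
      replace this : 2*(Real.pi:ℂ)*Complex.I * 1 = 2*(Real.pi:ℂ)*Complex.I * (n*K) := by rw [this]; ring
      have := mul_left_cancel₀ h2πI (show 2*(Real.pi:ℂ)*Complex.I * 1 = 2*(Real.pi:ℂ)*Complex.I * (n*K) by
        rw [mul_one]; linear_combination this)
      exact this
    have h1' : (1 : ℤ) = n * K := by exact_mod_cast h1
    have hdvd : (K : ℤ) ∣ 1 := Dvd.intro_left n h1'.symm
    have := Int.le_of_dvd one_pos hdvd
    omega
  simp_rw [hstep]
  rw [geom_sum_eq hζne, hζK]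
  simp

lemma sum_cos_unity (K : ℕ) (hK : 2 ≤ K) :
    ∑ k ∈ Finset.range K, Real.cos (2 * Real.pi * k / K) = 0 := by
  have h := sum_exp_unity K hK
  have hrw : ∀ k : ℕ, Complex.exp (2 * Real.pi * Complex.I * k / K)
      = Complex.exp (((2 * Real.pi * k / K : ℝ) : ℂ) * Complex.I) := by
    intro k; congr 1; push_cast; ring
  simp_rw [hrw] at h
  have h2 : ∑ k ∈ Finset.range K, Real.cos (2 * Real.pi * k / K)
      = (∑ k ∈ Finset.range K, Complex.exp (((2 * Real.pi * k / K : ℝ) : ℂ) * Complex.I)).re := by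
    rw [Complex.re_sum]
    exact Finset.sum_congr rfl fun k _ => (Complex.exp_ofReal_mul_I_re _).symm
  rw [h2, h]
  rfl

lemma sum_sin_unity (K : ℕ) (hK : 2 ≤ K) :
    ∑ k ∈ Finset.range K, Real.sin (2 * Real.pi * k / K) = 0 := by
  have h := sum_exp_unity K hK
  have hrw : ∀ k : ℕ, Complex.exp (2 * Real.pi * Complex.I * k / K)
      = Complex.exp (((2 * Real.pi * k / K : ℝ) : ℂ) * Complex.I) := by
    intro k; congr 1; push_cast; ring
  simp_rw [hrw] at h
  have h2 : ∑ k ∈ Finset.range K, Real.sin (2 * Real.pi * k / K)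
      = (∑ k ∈ Finset.range K, Complex.exp (((2 * Real.pi * k / K : ℝ) : ℂ) * Complex.I)).im := by
    rw [Complex.im_sum]
    exact Finset.sum_congr rfl fun k _ => (Complex.exp_ofReal_mul_I_im _).symm
  rw [h2, h]
  rfl

lemma mean_min (K : ℕ) (g : ℕ → ℝ) (m a : ℝ)
    (hm : ∑ k ∈ Finset.range K, g k = K * m) :
    ∑ k ∈ Finset.range K, (g k - m) ^ 2 ≤ ∑ k ∈ Finset.range K, (g k - a) ^ 2 := by
  have h1 : ∑ k ∈ Finset.range K, ((g k - a) ^ 2 - (g k - m) ^ 2)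
      = (m - a) * 2 * (∑ k ∈ Finset.range K, g k) - K * ((m - a) * (a + m)) := by
    simp_rw [show ∀ x : ℝ, (x - a) ^ 2 - (x - m) ^ 2 = (m - a) * 2 * x - (m - a) * (a + m)
      from fun x => by ring]
    rw [Finset.sum_sub_distrib, ← Finset.mul_sum, Finset.sum_const, Finset.card_range,
      nsmul_eq_mul]
  rw [Finset.sum_sub_distrib, hm] at h1
  nlinarith [sq_nonneg (m - a), Nat.cast_nonneg (α := ℝ) K]

/-- For each fixed radius, the shifted-average center minimizes the
circle-fitting energy over all centers. -/
theorem center_minimizes_energy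
    (K : ℕ) (hK : 2 ≤ K) (xc yc R : ℝ) (f : ℕ → ℝ)
    (θ : ℕ → ℝ) (hθ : ∀ k, θ k = 2 * Real.pi * k / K)
    (xt yt : ℕ → ℝ)
    (hxt : ∀ k, xt k = xc + (R + f k) * Real.cos (θ k))
    (hyt : ∀ k, yt k = yc + (R + f k) * Real.sin (θ k))
    (C : ℝ → ℝ → ℝ → ℝ)
    (hC : ∀ a b r, C a b r =
      ∑ k ∈ Finset.range K,
        ((xt k - a - r * Real.cos (θ k)) ^ 2 + (yt k - b - r * Real.sin (θ k)) ^ 2))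
    (xtc ytc : ℝ)
    (hxtc : xtc = xc + (1 / (K : ℝ)) * ∑ k ∈ Finset.range K, f k * Real.cos (θ k))
    (hytc : ytc = yc + (1 / (K : ℝ)) * ∑ k ∈ Finset.range K, f k * Real.sin (θ k)) :
    ∀ r : ℝ, ∀ a b : ℝ, C xtc ytc r ≤ C a b r := by
  intro r a b
  have hKpos : (0 : ℝ) < K := by positivity
  have hKne : (K : ℝ) ≠ 0 := ne_of_gt hKpos
  have hcos0 : ∑ k ∈ Finset.range K, Real.cos (θ k) = 0 := by
    simp_rw [hθ]; exact sum_cos_unity K hK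
  have hsin0 : ∑ k ∈ Finset.range K, Real.sin (θ k) = 0 := by
    simp_rw [hθ]; exact sum_sin_unity K hK
  set u : ℕ → ℝ := fun k => xt k - r * Real.cos (θ k) with hu
  set v : ℕ → ℝ := fun k => yt k - r * Real.sin (θ k) with hv
  have hsumu : ∑ k ∈ Finset.range K, u k = K * xtc := by
    have : ∀ k, u k = xc + (R - r) * Real.cos (θ k) + f k * Real.cos (θ k) := by
      intro k; simp only [hu, hxt]; ring
    simp_rw [this]
    rw [Finset.sum_add_distrib, Finset.sum_add_distrib, ← Finset.mul_sum, hcos0,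
      Finset.sum_const, Finset.card_range, nsmul_eq_mul, hxtc]
    field_simp
    ring
  have hsumv : ∑ k ∈ Finset.range K, v k = K * ytc := by
    have : ∀ k, v k = yc + (R - r) * Real.sin (θ k) + f k * Real.sin (θ k) := by
      intro k; simp only [hv, hyt]; ring
    simp_rw [this]
    rw [Finset.sum_add_distrib, Finset.sum_add_distrib, ← Finset.mul_sum, hsin0,
      Finset.sum_const, Finset.card_range, nsmul_eq_mul, hytc]
    field_simp
    ring
  have hCeq : ∀ a' b' : ℝ, C a' b' r =
      (∑ k ∈ Finset.range K, (u k - a') ^ 2) + ∑ k ∈ Finset.range K, (v k - b') ^ 2 := by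
    intro a' b'
    rw [hC, ← Finset.sum_add_distrib]
    refine Finset.sum_congr rfl fun k _ => ?_
    simp only [hu, hv]
    ring
  rw [hCeq, hCeq]
  exact add_le_add (mean_min K u xtc a hsumu) (mean_min K v ytc b hsumv)
end

section
/- Let K ≥ 3 be an integer, θ_k = 2πk/K for k = 0,…,K−1, and let x̃_k = x_c + (R + f_k)cos θ_k, ỹ_k = y_c + (R + f_k)sin θ_k. Set x̃_c = x_c + (1/K)∑_{k=0}^{K−1} f_k cos θ_k, ỹ_c = y_c + (1/K)∑_{k=0}^{K−1} f_k sin θ_k, and R̃ = R + (1/K)∑_{k=0}^{K−1} f_k. Then the radius stationarity equation holds: ∑_{k=0}^{K−1}[(x̃_k − x̃_c − R̃ cos θ_k)cos θ_k + (ỹ_k − ỹ_c − R̃ sin θ_k)sin θ_k] = 0. In other words, the fitted circle radius is the original radius modified by the average (1/K)∑_{k=0}^{K−1} f_k of the force values. -/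
open Real Finset

lemma sum_exp_eq_zero (K : ℕ) (hK : 3 ≤ K) :
    ∑ k ∈ Finset.range K, Complex.exp (2 * Real.pi * Complex.I * k / K) = 0 := by
  have hKne : (K : ℂ) ≠ 0 := by
    exact_mod_cast (Nat.cast_ne_zero (R := ℂ)).mpr (by omega)
  set z : ℂ := Complex.exp (2 * Real.pi * Complex.I / K) with hz
  have hzk : ∀ k : ℕ, Complex.exp (2 * Real.pi * Complex.I * k / K) = z ^ k := by
    intro k
    rw [hz, ← Complex.exp_nat_mul]
    ring_nf
  have hz1 : z ≠ 1 := by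
    rw [hz, Ne, Complex.exp_eq_one_iff]
    rintro ⟨n, hn⟩
    have hI : (Complex.I : ℂ) ≠ 0 := Complex.I_ne_zero
    have hpi : (Real.pi : ℂ) ≠ 0 := by exact_mod_cast Real.pi_ne_zero
    have h2 : (2 : ℂ) * Real.pi * Complex.I ≠ 0 := by simp [hpi, hI]
    have hnk : ((n * K : ℤ) : ℂ) = 1 := by
      field_simp at hn
      push_cast
      have : ((n:ℂ) * K) * (2 * Real.pi * Complex.I) = 1 * (2 * Real.pi * Complex.I) := by
        linear_combination (-(2 * Real.pi * Complex.I)) * hn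
      exact mul_right_cancel₀ h2 this
    have hnk' : n * (K : ℤ) = 1 := by exact_mod_cast hnk
    have hKge : (3 : ℤ) ≤ K := by exact_mod_cast hK
    rcases le_or_gt n 0 with h | h
    · nlinarith
    · have : 1 ≤ n := h
      nlinarith
  have hzK : z ^ K = 1 := by
    rw [hz, ← Complex.exp_nat_mul, mul_comm, div_mul_cancel₀ _ hKne]
    exact Complex.exp_two_pi_mul_I
  simp only [hzk]
  rw [geom_sum_eq hz1, hzK]
  simp

lemma sum_cos_sin_zero (K : ℕ) (hK : 3 ≤ K) :
    (∑ k ∈ Finset.range K, Real.cos (2 * Real.pi * k / K)) = 0 ∧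
    (∑ k ∈ Finset.range K, Real.sin (2 * Real.pi * k / K)) = 0 := by
  have h := sum_exp_eq_zero K hK
  have hrw : ∀ k : ℕ, (2 : ℂ) * Real.pi * Complex.I * k / K
      = ((2 * Real.pi * k / K : ℝ) : ℂ) * Complex.I := by
    intro k; push_cast; ring
  simp only [hrw] at h
  constructor
  · have h2 := congrArg Complex.re h
    rw [Complex.re_sum, Complex.zero_re] at h2
    rw [← h2]
    exact Finset.sum_congr rfl fun k _ => (Complex.exp_ofReal_mul_I_re _).symm
  · have h2 := congrArg Complex.im h
    rw [Complex.im_sum, Complex.zero_im] at h2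
    rw [← h2]
    exact Finset.sum_congr rfl fun k _ => (Complex.exp_ofReal_mul_I_im _).symm

/-- Radius stationarity: with the shifted-average center and the radius
updated by the average force, the radius first-order equation holds. -/
theorem radius_stationarity
    (K : ℕ) (hK : 3 ≤ K) (xc yc R : ℝ) (f : ℕ → ℝ)
    (θ : ℕ → ℝ) (hθ : ∀ k, θ k = 2 * Real.pi * k / K)
    (xt yt : ℕ → ℝ)
    (hxt : ∀ k, xt k = xc + (R + f k) * Real.cos (θ k))
    (hyt : ∀ k, yt k = yc + (R + f k) * Real.sin (θ k))
    (xtc ytc Rt : ℝ)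
    (hxtc : xtc = xc + (1 / (K : ℝ)) * ∑ k ∈ Finset.range K, f k * Real.cos (θ k))
    (hytc : ytc = yc + (1 / (K : ℝ)) * ∑ k ∈ Finset.range K, f k * Real.sin (θ k))
    (hRt : Rt = R + (1 / (K : ℝ)) * ∑ k ∈ Finset.range K, f k) :
    ∑ k ∈ Finset.range K,
      ((xt k - xtc - Rt * Real.cos (θ k)) * Real.cos (θ k) +
       (yt k - ytc - Rt * Real.sin (θ k)) * Real.sin (θ k)) = 0 := by
  have hKne : (K : ℝ) ≠ 0 := Nat.cast_ne_zero.mpr (by omega)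
  have hcos : ∑ k ∈ Finset.range K, Real.cos (θ k) = 0 := by
    simp only [hθ]; exact (sum_cos_sin_zero K hK).1
  have hsin : ∑ k ∈ Finset.range K, Real.sin (θ k) = 0 := by
    simp only [hθ]; exact (sum_cos_sin_zero K hK).2
  set A : ℝ := (1 / (K : ℝ)) * ∑ k ∈ Finset.range K, f k with hA
  set Cx : ℝ := (1 / (K : ℝ)) * ∑ k ∈ Finset.range K, f k * Real.cos (θ k) with hCx
  set Cy : ℝ := (1 / (K : ℝ)) * ∑ k ∈ Finset.range K, f k * Real.sin (θ k) with hCy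
  have key : ∀ k ∈ Finset.range K,
      (xt k - xtc - Rt * Real.cos (θ k)) * Real.cos (θ k) +
      (yt k - ytc - Rt * Real.sin (θ k)) * Real.sin (θ k)
      = (f k - A) - Cx * Real.cos (θ k) - Cy * Real.sin (θ k) := by
    intro k _
    rw [hxt, hyt, hxtc, hytc, hRt]
    have hpy := Real.sin_sq_add_cos_sq (θ k)
    linear_combination (f k - A) * hpy
  rw [Finset.sum_congr rfl key]
  simp only [Finset.sum_sub_distrib, ← Finset.mul_sum, hcos, hsin,
    Finset.sum_const, Finset.card_range, nsmul_eq_mul]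
  field_simp
  rw [hA, mul_zero, zero_mul, sub_zero, sub_zero, ← mul_assoc, mul_one_div_cancel hKne, one_mul, sub_self]
end
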